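/- Let G be a finite simple graph. Then G is a gap-free forest if and only if G contains no induced subgraph isomorphic to the 3-cycle C_3, the 4-cycle C_4, the 5-cycle C_5, or the path P_4 with 4 edges (on 5 vertices). -/

import Mathlib

/-- `G` is gap-free: any two edges in the same connected component are joined by an edge
between some pair of their endpoints. -/
def GapFree {V : Type*} (G : SimpleGraph V) : Prop :=
  ∀ x₁ x₂ y₁ y₂ : V, G.Adj x₁ x₂ → G.Adj y₁ y₂ → G.Reachable x₁ y₁ →
    G.Adj x₁ y₁ ∨ G.Adj x₁ y₂ ∨ G.Adj x₂ y₁ ∨ G.Adj x₂ y₂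

/-- `G` has an induced subgraph isomorphic to `H`. -/
def HasInducedIso {V : Type*} {n : ℕ} (G : SimpleGraph V) (H : SimpleGraph (Fin n)) : Prop :=
  ∃ f : Fin n → V, Function.Injective f ∧ ∀ i j, G.Adj (f i) (f j) ↔ H.Adj i j

section Aux
open SimpleGraph
variable {V : Type*} {G : SimpleGraph V} {u v : V}


lemma exists_walk_getVerts (p : G.Walk u v) (i j : ℕ) (hij : i ≤ j) :
    ∃ q : G.Walk (p.getVert i) (p.getVert j), q.length ≤ j - i := by
  induction p generalizing i j with
  | nil => exact ⟨.nil, by simp⟩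
  | cons h r ih =>
    match i, j with
    | 0, 0 => exact ⟨.nil, by simp⟩
    | 0, (j+1) =>
      obtain ⟨q, hq⟩ := ih 0 j (Nat.zero_le _)
      exact ⟨Walk.cons h (q.copy (Walk.getVert_zero r) rfl), by change (q.copy _ _).length + 1 ≤ _; exact Nat.succ_le_succ ((Walk.length_copy _ _ _).trans_le (by omega))⟩
    | (i+1), (j+1) =>
      obtain ⟨q, hq⟩ := ih i j (Nat.le_of_succ_le_succ hij)
      exact ⟨q, by simpa using hq⟩

lemma dist_getVerts_le (p : G.Walk u v) {i j : ℕ} (hij : i ≤ j) :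
    G.dist (p.getVert i) (p.getVert j) ≤ j - i := by
  obtain ⟨q, hq⟩ := exists_walk_getVerts p i j hij
  exact le_trans (SimpleGraph.dist_le q) hq

lemma shortest_dist_getVert (p : G.Walk u v) (hp : p.length = G.dist u v)
    {i j : ℕ} (hij : i ≤ j) (hj : j ≤ p.length) :
    G.dist (p.getVert i) (p.getVert j) = j - i := by
  refine le_antisymm (dist_getVerts_le p hij) ?_
  obtain ⟨w1, hw1⟩ := exists_walk_getVerts p 0 i (Nat.zero_le _)
  obtain ⟨w3, hw3⟩ := exists_walk_getVerts p j p.length hj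
  obtain ⟨q, hq⟩ := exists_walk_getVerts p i j hij
  obtain ⟨q', hq'⟩ := (Walk.reachable q).exists_walk_length_eq_dist
  have hfull := SimpleGraph.dist_le
    (((w1.copy (Walk.getVert_zero p) rfl).append q').append
      (w3.copy rfl (Walk.getVert_length p)))
  simp only [Walk.length_append, Walk.length_copy] at hfull
  rw [← hp] at hfull
  omega

lemma shortest_getVert_inj (p : G.Walk u v) (hp : p.length = G.dist u v)
    {i j : ℕ} (hi : i ≤ p.length) (hj : j ≤ p.length) (h : p.getVert i = p.getVert j) :
    i = j := by
  rcases Nat.le_total i j with hle | hle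
  · have := shortest_dist_getVert p hp hle hj
    rw [h, SimpleGraph.dist_self] at this
    omega
  · have := shortest_dist_getVert p hp hle hi
    rw [h, SimpleGraph.dist_self] at this
    omega

lemma shortest_not_adj (p : G.Walk u v) (hp : p.length = G.dist u v)
    {i j : ℕ} (hij : i + 2 ≤ j) (hj : j ≤ p.length) :
    ¬ G.Adj (p.getVert i) (p.getVert j) := by
  intro h
  have hij' : i ≤ j := by omega
  have := shortest_dist_getVert p hp hij' hj
  rw [SimpleGraph.dist_eq_one_iff_adj.mpr h] at this
  omega

lemma hii_C3 {a b c : V} (hab : G.Adj a b) (hbc : G.Adj b c) (hca : G.Adj c a) :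
    HasInducedIso G (cycleGraph 3) := by
  refine ⟨![a, b, c], ?_, ?_⟩
  · have h1 := hab.ne
    have h2 := hbc.ne
    have h3 := hca.ne
    intro i j hij
    fin_cases i <;> fin_cases j <;> simp_all <;> tauto
  · have h1 := hab.symm
    have h2 := hbc.symm
    have h3 := hca.symm
    intro i j
    fin_cases i <;> fin_cases j <;>
      simp (config := { decide := true }) [cycleGraph_adj'] <;> assumption

lemma hii_C4 {a b c d : V} (hab : G.Adj a b) (hbc : G.Adj b c) (hcd : G.Adj c d)
    (hda : G.Adj d a) (hac : ¬ G.Adj a c) (hbd : ¬ G.Adj b d)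
    (nac : a ≠ c) (nbd : b ≠ d) :
    HasInducedIso G (cycleGraph 4) := by
  refine ⟨![a, b, c, d], ?_, ?_⟩
  · have h1 := hab.ne
    have h2 := hbc.ne
    have h3 := hcd.ne
    have h4 := hda.ne
    intro i j hij
    fin_cases i <;> fin_cases j <;> simp_all
  · have h1 := hab.symm
    have h2 := hbc.symm
    have h3 := hcd.symm
    have h4 := hda.symm
    have h5 : ¬ G.Adj c a := fun h => hac h.symm
    have h6 : ¬ G.Adj d b := fun h => hbd h.symm
    intro i j
    fin_cases i <;> fin_cases j <;>
      simp (config := { decide := true }) [cycleGraph_adj'] <;> assumption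

lemma hii_C5 {a b c d e : V} (hab : G.Adj a b) (hbc : G.Adj b c) (hcd : G.Adj c d)
    (hde : G.Adj d e) (hea : G.Adj e a)
    (hac : ¬ G.Adj a c) (had : ¬ G.Adj a d) (hbd : ¬ G.Adj b d)
    (hbe : ¬ G.Adj b e) (hce : ¬ G.Adj c e)
    (nac : a ≠ c) (nad : a ≠ d) (nbd : b ≠ d) (nbe : b ≠ e) (nce : c ≠ e) :
    HasInducedIso G (cycleGraph 5) := by
  refine ⟨![a, b, c, d, e], ?_, ?_⟩
  · have h1 := hab.ne
    have h2 := hbc.ne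
    have h3 := hcd.ne
    have h4 := hde.ne
    have h5 := hea.ne
    intro i j hij
    fin_cases i <;> fin_cases j <;> simp_all
  · have h1 := hab.symm
    have h2 := hbc.symm
    have h3 := hcd.symm
    have h4 := hde.symm
    have h5 := hea.symm
    have h6 : ¬ G.Adj c a := fun h => hac h.symm
    have h7 : ¬ G.Adj d a := fun h => had h.symm
    have h8 : ¬ G.Adj d b := fun h => hbd h.symm
    have h9 : ¬ G.Adj e b := fun h => hbe h.symm
    have h10 : ¬ G.Adj e c := fun h => hce h.symm
    intro i j
    fin_cases i <;> fin_cases j <;>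
      simp (config := { decide := true }) [cycleGraph_adj'] <;> assumption

lemma hii_P5 {a b c d e : V} (hab : G.Adj a b) (hbc : G.Adj b c) (hcd : G.Adj c d)
    (hde : G.Adj d e)
    (hac : ¬ G.Adj a c) (had : ¬ G.Adj a d) (hae : ¬ G.Adj a e)
    (hbd : ¬ G.Adj b d) (hbe : ¬ G.Adj b e) (hce : ¬ G.Adj c e)
    (nac : a ≠ c) (nad : a ≠ d) (nae : a ≠ e) (nbd : b ≠ d) (nbe : b ≠ e) (nce : c ≠ e) :
    HasInducedIso G (pathGraph 5) := by
  refine ⟨![a, b, c, d, e], ?_, ?_⟩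
  · have h1 := hab.ne
    have h2 := hbc.ne
    have h3 := hcd.ne
    have h4 := hde.ne
    intro i j hij
    fin_cases i <;> fin_cases j <;> simp_all
  · have h1 := hab.symm
    have h2 := hbc.symm
    have h3 := hcd.symm
    have h4 := hde.symm
    have h6 : ¬ G.Adj c a := fun h => hac h.symm
    have h7 : ¬ G.Adj d a := fun h => had h.symm
    have h8 : ¬ G.Adj e a := fun h => hae h.symm
    have h9 : ¬ G.Adj d b := fun h => hbd h.symm
    have h10 : ¬ G.Adj e b := fun h => hbe h.symm
    have h11 : ¬ G.Adj e c := fun h => hce h.symm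
    intro i j
    fin_cases i <;> fin_cases j <;>
      simp (config := { decide := true }) [pathGraph_adj] <;> assumption




lemma gapfree_key (hC3 : ¬ HasInducedIso G (cycleGraph 3))
    (hC4 : ¬ HasInducedIso G (cycleGraph 4))
    (hC5 : ¬ HasInducedIso G (cycleGraph 5))
    (hP5 : ¬ HasInducedIso G (pathGraph 5))
    {x1 x2 y1 y2 : V} (hx : G.Adj x1 x2) (hy : G.Adj y1 y2)
    (h11 : ¬ G.Adj x1 y1) (h12 : ¬ G.Adj x1 y2)
    (h21 : ¬ G.Adj x2 y1) (h22 : ¬ G.Adj x2 y2)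
    (hr : G.Reachable x2 y1)
    (hmin1 : G.dist x2 y1 ≤ G.dist x1 y1)
    (hmin2 : G.dist x2 y1 ≤ G.dist x2 y2) : False := by
  have ne1 : x1 ≠ y1 := fun h => h21 (h ▸ hx.symm)
  have ne2 : x2 ≠ y1 := fun h => h11 (h ▸ hx)
  have ne3 : x2 ≠ y2 := fun h => h12 (h ▸ hx)
  have ne4 : x1 ≠ y2 := fun h => h11 (by rw [h]; exact hy.symm)
  obtain ⟨p, hp⟩ := hr.exists_walk_length_eq_dist
  set d := p.length with hd
  have e0 : p.getVert 0 = x2 := p.getVert_zero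
  have ed : p.getVert d = y1 := p.getVert_length
  have hd2 : 2 ≤ d := by
    rcases Nat.lt_or_ge d 2 with h | h
    · interval_cases d
      · exact absurd ((hr.dist_eq_zero_iff).mp hp.symm) ne2
      · exact absurd (SimpleGraph.dist_eq_one_iff_adj.mp hp.symm) h21
    · exact h
  rw [← hp] at hmin1 hmin2
  -- x1 is not on the path
  have hx1 : ∀ k, k ≤ d → x1 ≠ p.getVert k := by
    intro k hk he
    rcases Nat.eq_zero_or_pos k with rfl | hkpos
    · rw [e0] at he; exact hx.ne he
    · have hdk := shortest_dist_getVert p hp hk (le_refl d)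
      rw [← he, ed] at hdk
      omega
  -- y2 is not on the path
  have hy2 : ∀ k, k ≤ d → y2 ≠ p.getVert k := by
    intro k hk he
    rcases Nat.eq_or_lt_of_le hk with rfl | hklt
    · rw [ed] at he; exact hy.ne he.symm
    · have hdk := shortest_dist_getVert p hp (Nat.zero_le k) hk
      rw [← he, e0] at hdk
      omega
  have hadjk : ∀ k, k < d → G.Adj (p.getVert k) (p.getVert (k + 1)) :=
    fun k hk => p.adj_getVert_succ hk
  have hchord : ∀ i j, i + 2 ≤ j → j ≤ d → ¬ G.Adj (p.getVert i) (p.getVert j) :=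
    fun i j h1 h2 => shortest_not_adj p hp h1 h2
  have hinj : ∀ i j, i ≤ d → j ≤ d → i ≠ j → p.getVert i ≠ p.getVert j :=
    fun i j hi hj hne he => hne (shortest_getVert_inj p hp hi hj he)
  have hbc : G.Adj x2 (p.getVert 1) := by
    have := hadjk 0 (by omega); rwa [e0] at this
  rcases Nat.lt_or_ge d 3 with h3 | h3
  · -- d = 2
    have hd : d = 2 := by omega
    have e2 : p.getVert 2 = y1 := by rw [show (2:ℕ) = d by omega]; exact ed
    have ecd : G.Adj (p.getVert 1) y1 := by
      have := hadjk 1 (by omega); rwa [e2] at this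
    by_cases hA : G.Adj x1 (p.getVert 1)
    · exact hC3 (hii_C3 hx hbc hA.symm)
    by_cases hB : G.Adj (p.getVert 1) y2
    · exact hC3 (hii_C3 ecd hy hB.symm)
    exact hP5 (hii_P5 hx hbc ecd hy hA h11 h12 h21 h22 hB
      (hx1 1 (by omega)) ne1 ne4 ne2 ne3 (fun h => hy2 1 (by omega) h.symm))
  · -- d ≥ 3
    have hcd' : G.Adj (p.getVert 1) (p.getVert 2) := hadjk 1 (by omega)
    have hde' : G.Adj (p.getVert 2) (p.getVert 3) := hadjk 2 (by omega)
    have c02 : ¬ G.Adj x2 (p.getVert 2) := by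
      have := hchord 0 2 (by omega) (by omega); rwa [e0] at this
    have c03 : ¬ G.Adj x2 (p.getVert 3) := by
      have := hchord 0 3 (by omega) (by omega); rwa [e0] at this
    have c13 : ¬ G.Adj (p.getVert 1) (p.getVert 3) := hchord 1 3 (by omega) (by omega)
    have n02 : x2 ≠ p.getVert 2 := by
      have := hinj 0 2 (by omega) (by omega) (by omega); rwa [e0] at this
    have n03 : x2 ≠ p.getVert 3 := by
      have := hinj 0 3 (by omega) (by omega) (by omega); rwa [e0] at this
    have n13 : p.getVert 1 ≠ p.getVert 3 := hinj 1 3 (by omega) (by omega) (by omega)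
    by_cases hA1 : G.Adj x1 (p.getVert 1)
    · exact hC3 (hii_C3 hx hbc hA1.symm)
    by_cases hA2 : G.Adj x1 (p.getVert 2)
    · exact hC4 (hii_C4 hx hbc hcd' hA2.symm hA1 c02 (hx1 1 (by omega)) n02)
    by_cases hA3 : G.Adj x1 (p.getVert 3)
    · exact hC5 (hii_C5 hx hbc hcd' hde' hA3.symm hA1 hA2 c02 c03 c13
        (hx1 1 (by omega)) (hx1 2 (by omega)) n02 n03 n13)
    exact hP5 (hii_P5 hx hbc hcd' hde' hA1 hA2 hA3 c02 c03 c13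
      (hx1 1 (by omega)) (hx1 2 (by omega)) (hx1 3 (by omega)) n02 n03 n13)

lemma gapfree_of_no_induced (hC3 : ¬ HasInducedIso G (cycleGraph 3))
    (hC4 : ¬ HasInducedIso G (cycleGraph 4))
    (hC5 : ¬ HasInducedIso G (cycleGraph 5))
    (hP5 : ¬ HasInducedIso G (pathGraph 5)) : GapFree G := by
  intro x1 x2 y1 y2 hx hy hr
  by_contra hcon
  push_neg at hcon
  obtain ⟨h11, h12, h21, h22⟩ := hcon
  have r11 : G.Reachable x1 y1 := hr
  have r21 : G.Reachable x2 y1 := hx.symm.reachable.trans hr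
  have r12 : G.Reachable x1 y2 := hr.trans hy.reachable
  have r22 : G.Reachable x2 y2 := r21.trans hy.reachable
  set d11 := G.dist x1 y1
  set d12 := G.dist x1 y2
  set d21 := G.dist x2 y1
  set d22 := G.dist x2 y2
  have hcases : d21 ≤ d11 ∧ d21 ≤ d22 ∨ d11 ≤ d21 ∧ d11 ≤ d12 ∨
      d22 ≤ d12 ∧ d22 ≤ d21 ∨ d12 ≤ d22 ∧ d12 ≤ d11 := by omega
  rcases hcases with ⟨ha, hb⟩ | ⟨ha, hb⟩ | ⟨ha, hb⟩ | ⟨ha, hb⟩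
  · exact gapfree_key hC3 hC4 hC5 hP5 hx hy h11 h12 h21 h22 r21 ha hb
  · exact gapfree_key hC3 hC4 hC5 hP5 hx.symm hy h21 h22 h11 h12 r11 ha hb
  · exact gapfree_key hC3 hC4 hC5 hP5 hx hy.symm h12 h11 h22 h21 r22 ha hb
  · exact gapfree_key hC3 hC4 hC5 hP5 hx.symm hy.symm h22 h21 h12 h11 r12 ha hb

lemma acyclic_of_no_induced (hC3 : ¬ HasInducedIso G (cycleGraph 3))
    (hC4 : ¬ HasInducedIso G (cycleGraph 4))
    (hC5 : ¬ HasInducedIso G (cycleGraph 5))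
    (hP5 : ¬ HasInducedIso G (pathGraph 5)) : G.IsAcyclic := by
  rw [isAcyclic_iff_forall_adj_isBridge]
  intro u w hadj
  rw [isBridge_iff]
  intro hreach
  set G' := G \ fromEdgeSet {s(u, w)} with hG'
  have hreach : G'.Reachable u w := hreach
  obtain ⟨p, hp'⟩ := hreach.exists_walk_length_eq_dist
  have hp : p.length = G'.dist u w := hp'
  set d := p.length with hd
  have e0 : p.getVert 0 = u := p.getVert_zero
  have ed : p.getVert d = w := p.getVert_length
  -- adjacency transfer
  have hG'adj : ∀ x y : V, G'.Adj x y ↔ G.Adj x y ∧ s(x, y) ≠ s(u, w) := by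
    intro x y
    rw [hG', sdiff_adj, fromEdgeSet_adj]
    constructor
    · rintro ⟨h1, h2⟩
      exact ⟨h1, fun he => h2 ⟨he, h1.ne⟩⟩
    · rintro ⟨h1, h2⟩
      exact ⟨h1, fun he => h2 he.1⟩
  have hd2 : 2 ≤ d := by
    rcases Nat.lt_or_ge d 2 with h | h
    · interval_cases d
      · exact absurd ((hreach.dist_eq_zero_iff).mp hp.symm) hadj.ne
      · have : G'.Adj u w := SimpleGraph.dist_eq_one_iff_adj.mp hp.symm
        rw [hG'adj] at this
        exact (this.2 rfl).elim
    · exact h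
  have hinj : ∀ i j, i ≤ d → j ≤ d → i ≠ j → p.getVert i ≠ p.getVert j :=
    fun i j hi hj hne he => hne (shortest_getVert_inj p hp hi hj he)
  have hadjk : ∀ k, k < d → G.Adj (p.getVert k) (p.getVert (k + 1)) := by
    intro k hk
    have := p.adj_getVert_succ hk
    rw [hG'adj] at this
    exact this.1
  -- chords are non-adjacent in G (except the pair (0, d))
  have hchord : ∀ i j, i + 2 ≤ j → j ≤ d → (i ≠ 0 ∨ j ≠ d) → ¬ G.Adj (p.getVert i) (p.getVert j) := by
    intro i j hij hj hne hAdj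
    have hnG' : ¬ G'.Adj (p.getVert i) (p.getVert j) := shortest_not_adj p hp hij hj
    rw [hG'adj] at hnG'
    push_neg at hnG'
    have hse := hnG' hAdj
    rw [Sym2.eq_iff] at hse
    rcases hse with ⟨hiu, hjw⟩ | ⟨hiw, hju⟩
    · have h1 := shortest_getVert_inj p hp (show i ≤ d by omega) (Nat.zero_le d) (hiu.trans e0.symm)
      have h2 := shortest_getVert_inj p hp hj (le_refl d) (hjw.trans ed.symm)
      rcases hne with h | h <;> omega
    · have h2 := shortest_getVert_inj p hp (show i ≤ d by omega) (le_refl d) (hiw.trans ed.symm)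
      omega
  have hwu : G.Adj (p.getVert d) (p.getVert 0) := by rw [e0, ed]; exact hadj.symm
  rcases Nat.lt_or_ge d 5 with h5 | h5
  · interval_cases d
    · -- d = 2 : triangle u, g1, w
      exact hC3 (hii_C3 (hadjk 0 (by omega)) (hadjk 1 (by omega)) hwu)
    · -- d = 3 : C4
      exact hC4 (hii_C4 (hadjk 0 (by omega)) (hadjk 1 (by omega)) (hadjk 2 (by omega)) hwu
        (hchord 0 2 (by omega) (by omega) (by omega))
        (hchord 1 3 (by omega) (by omega) (by omega))
        (hinj 0 2 (by omega) (by omega) (by omega))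
        (hinj 1 3 (by omega) (by omega) (by omega)))
    · -- d = 4 : C5
      exact hC5 (hii_C5 (hadjk 0 (by omega)) (hadjk 1 (by omega)) (hadjk 2 (by omega))
        (hadjk 3 (by omega)) hwu
        (hchord 0 2 (by omega) (by omega) (by omega))
        (hchord 0 3 (by omega) (by omega) (by omega))
        (hchord 1 3 (by omega) (by omega) (by omega))
        (hchord 1 4 (by omega) (by omega) (by omega))
        (hchord 2 4 (by omega) (by omega) (by omega))
        (hinj 0 2 (by omega) (by omega) (by omega))
        (hinj 0 3 (by omega) (by omega) (by omega))
        (hinj 1 3 (by omega) (by omega) (by omega))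
        (hinj 1 4 (by omega) (by omega) (by omega))
        (hinj 2 4 (by omega) (by omega) (by omega)))
  · -- d ≥ 5 : P5 on first five vertices
    exact hP5 (hii_P5 (hadjk 0 (by omega)) (hadjk 1 (by omega)) (hadjk 2 (by omega))
      (hadjk 3 (by omega))
      (hchord 0 2 (by omega) (by omega) (by omega))
      (hchord 0 3 (by omega) (by omega) (by omega))
      (hchord 0 4 (by omega) (by omega) (by omega))
      (hchord 1 3 (by omega) (by omega) (by omega))
      (hchord 1 4 (by omega) (by omega) (by omega))
      (hchord 2 4 (by omega) (by omega) (by omega))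
      (hinj 0 2 (by omega) (by omega) (by omega))
      (hinj 0 3 (by omega) (by omega) (by omega))
      (hinj 0 4 (by omega) (by omega) (by omega))
      (hinj 1 3 (by omega) (by omega) (by omega))
      (hinj 1 4 (by omega) (by omega) (by omega))
      (hinj 2 4 (by omega) (by omega) (by omega)))

lemma no_C3_of_acyclic (ha : G.IsAcyclic) : ¬ HasInducedIso G (cycleGraph 3) := by
  rintro ⟨f, hinj, hiso⟩
  have hne : ∀ i j : Fin 3, i ≠ j → f i ≠ f j := fun i j h he => h (hinj he)
  have h01 : G.Adj (f 0) (f 1) := (hiso 0 1).mpr (by decide)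
  have h02 : G.Adj (f 0) (f 2) := (hiso 0 2).mpr (by decide)
  have h21 : G.Adj (f 2) (f 1) := (hiso 2 1).mpr (by decide)
  have hp1 : (Walk.cons h01 .nil).IsPath := by
    simp [Walk.isPath_def, h01.ne]
  have hp2 : (Walk.cons h02 (Walk.cons h21 .nil)).IsPath := by
    simp [Walk.isPath_def, hne 0 2 (by decide), hne 0 1 (by decide), hne 2 1 (by decide)]
  have := isAcyclic_iff_path_unique.mp ha ⟨_, hp1⟩ ⟨_, hp2⟩
  have hl := congrArg (fun q : G.Path (f 0) (f 1) => q.1.length) this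
  simp at hl

lemma no_C4_of_acyclic (ha : G.IsAcyclic) : ¬ HasInducedIso G (cycleGraph 4) := by
  rintro ⟨f, hinj, hiso⟩
  have hne : ∀ i j : Fin 4, i ≠ j → f i ≠ f j := fun i j h he => h (hinj he)
  have h01 : G.Adj (f 0) (f 1) := (hiso 0 1).mpr (by decide)
  have h03 : G.Adj (f 0) (f 3) := (hiso 0 3).mpr (by decide)
  have h32 : G.Adj (f 3) (f 2) := (hiso 3 2).mpr (by decide)
  have h21 : G.Adj (f 2) (f 1) := (hiso 2 1).mpr (by decide)
  have hp1 : (Walk.cons h01 .nil).IsPath := by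
    simp [Walk.isPath_def, h01.ne]
  have hp2 : (Walk.cons h03 (Walk.cons h32 (Walk.cons h21 .nil))).IsPath := by
    simp [Walk.isPath_def, hne 0 3 (by decide), hne 0 2 (by decide), hne 0 1 (by decide),
      hne 3 2 (by decide), hne 3 1 (by decide), hne 2 1 (by decide)]
  have := isAcyclic_iff_path_unique.mp ha ⟨_, hp1⟩ ⟨_, hp2⟩
  have hl := congrArg (fun q : G.Path (f 0) (f 1) => q.1.length) this
  simp at hl

lemma no_C5_of_acyclic (ha : G.IsAcyclic) : ¬ HasInducedIso G (cycleGraph 5) := by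
  rintro ⟨f, hinj, hiso⟩
  have hne : ∀ i j : Fin 5, i ≠ j → f i ≠ f j := fun i j h he => h (hinj he)
  have h01 : G.Adj (f 0) (f 1) := (hiso 0 1).mpr (by decide)
  have h04 : G.Adj (f 0) (f 4) := (hiso 0 4).mpr (by decide)
  have h43 : G.Adj (f 4) (f 3) := (hiso 4 3).mpr (by decide)
  have h32 : G.Adj (f 3) (f 2) := (hiso 3 2).mpr (by decide)
  have h21 : G.Adj (f 2) (f 1) := (hiso 2 1).mpr (by decide)
  have hp1 : (Walk.cons h01 .nil).IsPath := by
    simp [Walk.isPath_def, h01.ne]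
  have hp2 : (Walk.cons h04 (Walk.cons h43 (Walk.cons h32 (Walk.cons h21 .nil)))).IsPath := by
    simp [Walk.isPath_def, hne 0 4 (by decide), hne 0 3 (by decide), hne 0 2 (by decide),
      hne 0 1 (by decide), hne 4 3 (by decide), hne 4 2 (by decide), hne 4 1 (by decide),
      hne 3 2 (by decide), hne 3 1 (by decide), hne 2 1 (by decide)]
  have := isAcyclic_iff_path_unique.mp ha ⟨_, hp1⟩ ⟨_, hp2⟩
  have hl := congrArg (fun q : G.Path (f 0) (f 1) => q.1.length) this
  simp at hl

lemma no_P5_of_gapfree (hg : GapFree G) : ¬ HasInducedIso G (pathGraph 5) := by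
  rintro ⟨f, hinj, hiso⟩
  have h01 : G.Adj (f 0) (f 1) := (hiso 0 1).mpr (by rw [pathGraph_adj]; decide)
  have h12 : G.Adj (f 1) (f 2) := (hiso 1 2).mpr (by rw [pathGraph_adj]; decide)
  have h23 : G.Adj (f 2) (f 3) := (hiso 2 3).mpr (by rw [pathGraph_adj]; decide)
  have h34 : G.Adj (f 3) (f 4) := (hiso 3 4).mpr (by rw [pathGraph_adj]; decide)
  have hr : G.Reachable (f 0) (f 3) :=
    (h01.reachable.trans h12.reachable).trans h23.reachable
  rcases hg (f 0) (f 1) (f 3) (f 4) h01 h34 hr with h | h | h | h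
  · exact absurd ((hiso 0 3).mp h) (by rw [pathGraph_adj]; decide)
  · exact absurd ((hiso 0 4).mp h) (by rw [pathGraph_adj]; decide)
  · exact absurd ((hiso 1 3).mp h) (by rw [pathGraph_adj]; decide)
  · exact absurd ((hiso 1 4).mp h) (by rw [pathGraph_adj]; decide)

end Aux

theorem stmt13 {V : Type*} [Fintype V] (G : SimpleGraph V) :
    (G.IsAcyclic ∧ GapFree G) ↔
      (¬ HasInducedIso G (SimpleGraph.cycleGraph 3) ∧
        ¬ HasInducedIso G (SimpleGraph.cycleGraph 4) ∧
        ¬ HasInducedIso G (SimpleGraph.cycleGraph 5) ∧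
        ¬ HasInducedIso G (SimpleGraph.pathGraph 5)) := by
  constructor
  · rintro ⟨ha, hg⟩
    exact ⟨no_C3_of_acyclic ha, no_C4_of_acyclic ha, no_C5_of_acyclic ha, no_P5_of_gapfree hg⟩
  · rintro ⟨h3, h4, h5, hp⟩
    exact ⟨acyclic_of_no_induced h3 h4 h5 hp, gapfree_of_no_induced h3 h4 h5 hp⟩
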